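/- Let A_m : H ⇉ H be σ_m-comonotone with σ_m ≤ 0, and define G on H^{m−1} by G(x) = K(x) + N_{D}(x), where D = {(x,…,x) ∈ H^{m−1}}, N_D is the normal cone to D, and K(x) = {(v/(m−1),…,v/(m−1)) : v ∈ A_m(x₁)} if x = (x₁,…,x₁) ∈ D and K(x) = ∅ otherwise. Then G is (m−1)σ_m-comonotone. -/

import Mathlib

open Pointwise

open InnerProductSpace

/-- `A` is `σ`-comonotone. -/
def SigmaComonotone {E : Type*} [NormedAddCommGroup E] [InnerProductSpace ℝ E]
    (A : E → Set E) (σ : ℝ) : Prop :=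
  ∀ x y u v, u ∈ A x → v ∈ A y → σ * ‖u - v‖ ^ 2 ≤ ⟪x - y, u - v⟫_ℝ

theorem stmt8 {H : Type*} [NormedAddCommGroup H] [InnerProductSpace ℝ H]
    (m : ℕ) (hm : 2 ≤ m) (Am : H → Set H) (σm : ℝ) (hσm : σm ≤ 0)
    (hAm : SigmaComonotone Am σm) :
    SigmaComonotone
      (fun x : PiLp 2 (fun _ : Fin (m - 1) => H) =>
        ({u : PiLp 2 (fun _ : Fin (m - 1) => H) |
            (∀ i j, x i = x j) ∧
              ∃ v ∈ Am (x ⟨0, by omega⟩), ∀ i, u i = ((m : ℝ) - 1)⁻¹ • v} : Set _)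
          + {w : PiLp 2 (fun _ : Fin (m - 1) => H) |
              (∀ i j, x i = x j) ∧ ∑ i, w i = 0})
      (((m : ℝ) - 1) * σm) := by
  intro x y u v hu hv
  obtain ⟨ku, ⟨hxc, a, ha, hka⟩, wu, ⟨-, hwu⟩, rfl⟩ := hu
  obtain ⟨kv, ⟨hyc, b, hb, hkb⟩, wv, ⟨-, hwv⟩, rfl⟩ := hv
  have hcard : (Fintype.card (Fin (m - 1)) : ℝ) = (m : ℝ) - 1 := by
    simp [Nat.cast_sub (by omega : 1 ≤ m)]
  have hm1 : (0:ℝ) < (m:ℝ) - 1 := by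
    have : (2:ℝ) ≤ (m:ℝ) := by exact_mod_cast hm
    linarith
  set i0 : Fin (m - 1) := ⟨0, by omega⟩ with hi0
  have hsum : ∑ i, ((ku + wu) i - (kv + wv) i) = a - b := by
    have h1 : ∑ i, (ku + wu) i = a := by
      have h : ∑ i, (ku + wu) i = ∑ _i : Fin (m - 1), ((m : ℝ) - 1)⁻¹ • a + ∑ i, wu i := by
        rw [← Finset.sum_add_distrib]
        exact Finset.sum_congr rfl fun i _ => by simp [hka i]
      rw [h, hwu, add_zero, Finset.sum_const, Finset.card_univ, ← Nat.cast_smul_eq_nsmul ℝ,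
        smul_smul, hcard, mul_inv_cancel₀ (ne_of_gt hm1), one_smul]
    have h2 : ∑ i, (kv + wv) i = b := by
      have h : ∑ i, (kv + wv) i = ∑ _i : Fin (m - 1), ((m : ℝ) - 1)⁻¹ • b + ∑ i, wv i := by
        rw [← Finset.sum_add_distrib]
        exact Finset.sum_congr rfl fun i _ => by simp [hkb i]
      rw [h, hwv, add_zero, Finset.sum_const, Finset.card_univ, ← Nat.cast_smul_eq_nsmul ℝ,
        smul_smul, hcard, mul_inv_cancel₀ (ne_of_gt hm1), one_smul]
    rw [Finset.sum_sub_distrib, h1, h2]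
  have hinner : ⟪x - y, (ku + wu) - (kv + wv)⟫_ℝ = ⟪x i0 - y i0, a - b⟫_ℝ := by
    rw [PiLp.inner_apply]
    have h : ∀ i : Fin (m - 1), ⟪(x - y) i, ((ku + wu) - (kv + wv)) i⟫_ℝ
        = ⟪x i0 - y i0, (ku + wu) i - (kv + wv) i⟫_ℝ := by
      intro i
      have hx : x i = x i0 := hxc i i0
      have hy : y i = y i0 := hyc i i0
      simp [PiLp.sub_apply, hx, hy]
    rw [Finset.sum_congr rfl fun i _ => h i, ← inner_sum, hsum]
  have hnorm : ‖a - b‖ ^ 2 ≤ ((m:ℝ) - 1) * ‖(ku + wu) - (kv + wv)‖ ^ 2 := by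
    rw [PiLp.norm_sq_eq_of_L2]
    have h1 : ‖a - b‖ ≤ ∑ i, ‖(ku + wu) i - (kv + wv) i‖ := by
      rw [← hsum]; exact norm_sum_le _ _
    calc ‖a - b‖ ^ 2 ≤ (∑ i, ‖(ku + wu) i - (kv + wv) i‖) ^ 2 :=
          pow_le_pow_left₀ (norm_nonneg _) h1 2
      _ ≤ (Fintype.card (Fin (m - 1)) : ℝ) * ∑ i, ‖(ku + wu) i - (kv + wv) i‖ ^ 2 := by
          have := sq_sum_le_card_mul_sum_sq
            (s := (Finset.univ : Finset (Fin (m - 1))))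
            (f := fun i => ‖(ku + wu) i - (kv + wv) i‖) (α := ℝ)
          simpa using this
      _ = ((m:ℝ) - 1) * ∑ i, ‖((ku + wu) - (kv + wv)) i‖ ^ 2 := by
          rw [hcard]
          exact congrArg _ (Finset.sum_congr rfl fun i _ => by simp [PiLp.sub_apply])
  have hbase := hAm (x i0) (y i0) a b ha hb
  calc ((m:ℝ) - 1) * σm * ‖(ku + wu) - (kv + wv)‖ ^ 2
      = σm * (((m:ℝ) - 1) * ‖(ku + wu) - (kv + wv)‖ ^ 2) := by ring
    _ ≤ σm * ‖a - b‖ ^ 2 := mul_le_mul_of_nonpos_left hnorm hσm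
    _ ≤ ⟪x i0 - y i0, a - b⟫_ℝ := hbase
    _ = ⟪x - y, (ku + wu) - (kv + wv)⟫_ℝ := hinner.symm
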